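/- Local slice theorem, part (d) — base change of invariants: With s a local slice of degree d and denominator c, let B be any commutative ring with a ring homomorphism η: (R_c)^{G_a} → B. Then the invariant ring of the induced G_a-coaction on B ⊗_{(R_c)^{G_a}} R_c is exactly B ⊗ 1. Equivalently, (B ⊗_{(R_c)^{G_a}} R_c)^{G_a} = B. -/

import Mathlib

open Polynomial TensorProduct

def IsGaCoaction {R : Type*} [CommRing R] (φ : R →+* Polynomial R) : Prop :=
  (∀ s : R, (φ s).eval 0 = s) ∧
  (∀ s : R, (φ s).map φ =
      (φ s).eval₂ ((Polynomial.C : Polynomial R →+* Polynomial (Polynomial R)).comp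
        Polynomial.C) (Polynomial.X + Polynomial.C Polynomial.X))

/-- The invariant subring `A^{G_a} = ker(φc - id)` of a coaction `φc : A → A[z]`. -/
noncomputable def invSubring {A : Type*} [CommRing A] (φc : A →+* Polynomial A) : Subring A :=
  RingHom.eqLocus φc (Polynomial.C : A →+* Polynomial A)

set_option maxHeartbeats 1000000
set_option synthInstance.maxHeartbeats 400000

section Helpers

variable {A : Type*} [CommRing A]

private lemma keycoeff (ψ : A →+* Polynomial A) (P : Polynomial A)
    (hP : P.map ψ = P.eval₂
      ((Polynomial.C : Polynomial A →+* Polynomial (Polynomial A)).comp Polynomial.C)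
      (Polynomial.X + Polynomial.C Polynomial.X)) (j : ℕ) :
    ψ (P.coeff j) = ∑ i ∈ Finset.range (P.natDegree + 1),
      C ((i.choose j : A) * P.coeff i) * X ^ (i - j) := by
  have h : (P.map ψ).coeff j = ψ (P.coeff j) := coeff_map ψ j
  rw [hP, eval₂_eq_sum_range, finset_sum_coeff] at h
  rw [← h]
  refine Finset.sum_congr rfl fun i _ => ?_
  rw [RingHom.comp_apply, coeff_C_mul, coeff_X_add_C_pow, C_mul, ← C_eq_natCast]
  ring

private lemma sum_top (b : ℕ → A) (M : ℕ) :
    ∑ i ∈ Finset.range (M + 1), C ((i.choose M : A) * b i) * X ^ (i - M) = C (b M) := by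
  refine (Finset.sum_eq_single_of_mem M (Finset.self_mem_range_succ M) ?_).trans ?_
  · intro i hi hne
    rw [Nat.choose_eq_zero_of_lt
      (lt_of_le_of_ne (Nat.lt_succ_iff.mp (Finset.mem_range.mp hi)) hne)]
    simp
  · simp

private lemma sum_coeff_ex (b : ℕ → A) (M j k : ℕ) (hk : 1 ≤ k) (hjk : j + k = M) :
    (∑ i ∈ Finset.range (M + 1), C ((i.choose j : A) * b i) * X ^ (i - j)).coeff k
      = (M.choose j : A) * b M := by
  rw [finset_sum_coeff]
  refine (Finset.sum_eq_single_of_mem M (Finset.self_mem_range_succ M) ?_).trans ?_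
  · intro i hi hne
    rw [coeff_C_mul, coeff_X_pow, if_neg, mul_zero]
    have hi' := Nat.lt_succ_iff.mp (Finset.mem_range.mp hi)
    omega
  · rw [coeff_C_mul, coeff_X_pow, if_pos (by omega), mul_one]

private lemma sum_deg (b : ℕ → A) (M j : ℕ) :
    (∑ i ∈ Finset.range (M + 1), C ((i.choose j : A) * b i) * X ^ (i - j)).degree
      ≤ ((M - j : ℕ) : WithBot ℕ) := by
  refine (degree_sum_le _ _).trans ?_
  refine Finset.sup_le fun i hi => ?_
  rw [C_mul_X_pow_eq_monomial]
  exact (degree_monomial_le _ _).trans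
    (Nat.cast_le.mpr (Nat.sub_le_sub_right (Nat.lt_succ_iff.mp (Finset.mem_range.mp hi)) j))

private lemma unit_inv_inv (ψ : A →+* Polynomial A) (u : Aˣ) (h : ψ ↑u = C (↑u : A)) :
    ψ ↑u⁻¹ = C (↑u⁻¹ : A) := by
  have h1 : ψ ↑u * ψ ↑u⁻¹ = 1 := by rw [← map_mul, Units.mul_inv, map_one]
  calc ψ ↑u⁻¹ = C (↑u⁻¹ : A) * (ψ ↑u * ψ ↑u⁻¹) := by
        rw [h, ← mul_assoc, ← C_mul, Units.inv_mul, C_1, one_mul]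
    _ = C (↑u⁻¹ : A) := by rw [h1, mul_one]

private lemma kill_torsion (a : A) (m e : ℕ) (hm : m • a = 0) (he : e • a = 0)
    (h : Nat.Coprime m e) : a = 0 := by
  have hb := Nat.gcd_eq_gcd_ab m e
  rw [Nat.Coprime] at h
  rw [h] at hb
  calc a = (1 : ℤ) • a := (one_zsmul a).symm
    _ = ((m : ℤ) * Nat.gcdA m e + (e : ℤ) * Nat.gcdB m e) • a := by
        rw [← hb]; norm_num
    _ = Nat.gcdA m e • ((m : ℤ) • a) + Nat.gcdB m e • ((e : ℤ) • a) := by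
        rw [add_smul, mul_comm (m : ℤ) _, mul_comm (e : ℤ) _, mul_smul, mul_smul]
    _ = 0 := by rw [natCast_zsmul, natCast_zsmul, hm, he, smul_zero, smul_zero, add_zero]

private lemma choose_mod_one {p : ℕ} (hp : p.Prime) (d n : ℕ)
    (hd : ∀ j, 0 < j → j < d → ((d.choose j : ZMod p)) = 0) (hr : n % d ≠ 0) :
    ((n.choose (n % d) : ZMod p)) = 1 := by
  haveI : Fact p.Prime := ⟨hp⟩
  rcases Nat.eq_zero_or_pos d with hd0 | hdpos
  · subst hd0
    rw [Nat.mod_zero] at hr ⊢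
    simp [Nat.choose_self]
  have hrd : n % d < d := Nat.mod_lt _ hdpos
  have hXd : ((X + 1 : Polynomial (ZMod p)) ^ d) = X ^ d + 1 := by
    ext k
    rw [coeff_X_add_one_pow, coeff_add, coeff_X_pow, coeff_one]
    rcases eq_or_ne k 0 with rfl | hk0
    · rw [if_neg (by omega), if_pos rfl, Nat.choose_zero_right, Nat.cast_one, zero_add]
    rcases eq_or_ne k d with rfl | hkd
    · rw [if_pos rfl, if_neg hk0, Nat.choose_self, Nat.cast_one, add_zero]
    rcases lt_or_gt_of_ne hkd with hlt | hgt
    · rw [hd k (by omega) hlt, if_neg hkd, if_neg hk0, add_zero]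
    · rw [Nat.choose_eq_zero_of_lt hgt, if_neg hkd, if_neg hk0, Nat.cast_zero, add_zero]
  obtain ⟨g, hg⟩ := sub_dvd_pow_sub_pow (X ^ d + 1 : Polynomial (ZMod p)) 1 (n / d)
  rw [add_sub_cancel_right, one_pow] at hg
  have hXq : ((X ^ d + 1 : Polynomial (ZMod p)) ^ (n / d)) = 1 + X ^ d * g := by
    rw [← hg]; ring
  have hsplit : ((X + 1 : Polynomial (ZMod p)) ^ n) = (1 + X ^ d * g) * (X + 1) ^ (n % d) := by
    conv_lhs => rw [← Nat.div_add_mod n d]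
    rw [pow_add, pow_mul, hXd, hXq]
  have hmain := congrArg (fun P => P.coeff (n % d)) hsplit
  simp only [coeff_X_add_one_pow] at hmain
  rw [add_mul, one_mul, coeff_add, coeff_X_add_one_pow, Nat.choose_self,
    show (X ^ d * g * (X + 1) ^ (n % d) : Polynomial (ZMod p))
      = g * (X + 1) ^ (n % d) * X ^ d by ring,
    coeff_mul_X_pow', if_neg (by omega)] at hmain
  rw [hmain, Nat.cast_one, add_zero]

private lemma pad_sum {M : Type*} [AddCommMonoid M] (f g : ℕ → M) (m m' : ℕ) (h : m ≤ m')
    (hfg : ∀ j, j < m → g j = f j) (hg0 : ∀ j, m ≤ j → g j = 0) :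
    ∑ j ∈ Finset.range m', g j = ∑ j ∈ Finset.range m, f j := by
  rw [← Finset.sum_subset (Finset.range_subset_range.mpr h)
    (fun j _ hj => hg0 j (le_of_not_gt fun c => hj (Finset.mem_range.mpr c)))]
  exact Finset.sum_congr rfl fun j hj => hfg j (Finset.mem_range.mp hj)

end Helpers

theorem main_invariant {A : Type*} [CommRing A] (ψ : A →+* Polynomial A)
    (hcounit : ∀ a : A, (ψ a).eval 0 = a)
    (hcoassoc : ∀ a : A, (ψ a).map ψ =
      (ψ a).eval₂ ((Polynomial.C : Polynomial A →+* Polynomial (Polynomial A)).comp Polynomial.C)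
        (Polynomial.X + Polynomial.C Polynomial.X))
    (t : A) (u : Aˣ) (d : ℕ) (hd1 : 1 ≤ d)
    (hQdeg : (ψ t).natDegree ≤ d) (hQtop : (ψ t).coeff d = ↑u)
    (hsl : ∀ a : A, (ψ a).degree < ((d : ℕ) : WithBot ℕ) → ψ a = Polynomial.C a)
    (B : Type*) [CommRing B] [Algebra (invSubring ψ) B]
    (φ' : (B ⊗[invSubring ψ] A) →+* Polynomial (B ⊗[invSubring ψ] A))
    (hφ' : ∀ (b : B) (a : A),
      φ' (b ⊗ₜ a) = Polynomial.C ((b ⊗ₜ (1 : A)) : B ⊗[invSubring ψ] A) *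
        Polynomial.map
          ((Algebra.TensorProduct.includeRight : A →ₐ[invSubring ψ] B ⊗[invSubring ψ] A) :
            A →+* B ⊗[invSubring ψ] A) (ψ a))
    (x : B ⊗[invSubring ψ] A) (hx : φ' x = Polynomial.C x) :
    ∃ b : B, x = b ⊗ₜ (1 : A) := by
  classical
  by_cases hT : Subsingleton (B ⊗[invSubring ψ] A)
  · exact ⟨0, Subsingleton.elim _ _⟩
  haveI hTn : Nontrivial (B ⊗[invSubring ψ] A) := not_subsingleton_iff_nontrivial.mp hT
  set ρ : A →+* B ⊗[invSubring ψ] A :=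
    ((Algebra.TensorProduct.includeRight : A →ₐ[invSubring ψ] B ⊗[invSubring ψ] A) :
      A →+* B ⊗[invSubring ψ] A) with hρdef
  haveI hAn : Nontrivial A := by
    refine ⟨⟨1, 0, fun h10 => ?_⟩⟩
    have h3 := congrArg ρ h10
    rw [map_one, map_zero] at h3
    exact hT (subsingleton_of_zero_eq_one h3.symm)
  have hu0 : ((u : A)) ≠ 0 := by
    intro h
    have h2 : IsUnit (0 : A) := h ▸ u.isUnit
    rw [isUnit_zero_iff] at h2
    exact zero_ne_one h2
  have hQd : (ψ t).natDegree = d :=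
    le_antisymm hQdeg (le_natDegree_of_ne_zero (by rw [hQtop]; exact hu0))
  have key : ∀ (a : A) (j : ℕ), ψ ((ψ a).coeff j) =
      ∑ i ∈ Finset.range ((ψ a).natDegree + 1),
        C ((i.choose j : A) * (ψ a).coeff i) * X ^ (i - j) :=
    fun a j => keycoeff ψ (ψ a) (hcoassoc a) j
  have top_inv : ∀ a : A, ψ ((ψ a).coeff (ψ a).natDegree) = C ((ψ a).coeff (ψ a).natDegree) :=
    fun a => (key a _).trans (sum_top _ _)
  have hinv_low : ∀ (a : A) (j : ℕ), j < (ψ a).natDegree → (ψ a).natDegree - j < d →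
      (((ψ a).natDegree.choose j : A)) * (ψ a).coeff (ψ a).natDegree = 0 := by
    intro a j hj hlt
    have hdeg : (ψ ((ψ a).coeff j)).degree < ((d : ℕ) : WithBot ℕ) := by
      rw [key a j]
      exact lt_of_le_of_lt (sum_deg _ _ _) (Nat.cast_lt.mpr hlt)
    have hC := hsl _ hdeg
    have h1 : (ψ ((ψ a).coeff j)).coeff ((ψ a).natDegree - j)
        = (((ψ a).natDegree.choose j : A)) * (ψ a).coeff (ψ a).natDegree := by
      rw [key a j]
      exact sum_coeff_ex _ _ _ _ (by omega) (by omega)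
    rw [hC, coeff_C, if_neg (by omega)] at h1
    exact h1.symm
  have htor : ∀ j, 0 < j → j < d → (d.choose j) • (1 : A) = 0 := by
    intro j hj0 hjd
    have h := hinv_low t j (by omega) (by omega)
    rw [hQd, hQtop] at h
    have h2 := congrArg (· * ((↑u⁻¹ : A))) h
    simp only [mul_assoc, Units.mul_inv, mul_one, zero_mul] at h2
    rw [nsmul_eq_mul, mul_one]
    exact h2
  have hu_inv : ψ ((u : A)) = C ((u : A)) := by
    have h := top_inv t
    rw [hQd, hQtop] at h
    exact h
  have hdvd : ∀ a : A, d ∣ (ψ a).natDegree := by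
    intro a
    by_contra hnd
    have hr : (ψ a).natDegree % d ≠ 0 := fun h => hnd (Nat.dvd_of_mod_eq_zero h)
    set n := (ψ a).natDegree with hn
    have hmod : n % d < d := Nat.mod_lt _ (by omega)
    have hle : n % d ≤ n := Nat.mod_le n d
    have hn0 : n ≠ 0 := by
      intro h; apply hr; omega
    have hrel0 := hinv_low a (n - n % d) (by omega) (by omega)
    have hrel : ((n.choose (n - n % d) : ℕ) : A) * (ψ a).coeff n = 0 := hrel0
    rw [Nat.choose_symm hle] at hrel
    have hcop : Nat.Coprime (n.choose (n % d)) (addOrderOf (1 : A)) := by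
      by_contra hnc
      obtain ⟨p, hpp, hp1, hp2⟩ := Nat.Prime.not_coprime_iff_dvd.mp hnc
      haveI : Fact p.Prime := ⟨hpp⟩
      have hz : ∀ j, 0 < j → j < d → ((d.choose j : ZMod p)) = 0 := by
        intro j h1 h2
        have hdv : addOrderOf (1 : A) ∣ d.choose j :=
          addOrderOf_dvd_iff_nsmul_eq_zero.mpr (htor j h1 h2)
        exact (ZMod.natCast_eq_zero_iff _ _).mpr (dvd_trans hp2 hdv)
      have hone := choose_mod_one hpp d n hz hr
      have h0 : ((n.choose (n % d) : ZMod p)) = 0 :=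
        (ZMod.natCast_eq_zero_iff _ _).mpr hp1
      rw [hone] at h0
      exact one_ne_zero h0
    have hcoeff0 : (ψ a).coeff n = 0 :=
      kill_torsion _ _ _ (by rw [nsmul_eq_mul]; exact hrel)
        (by
          have h1 := addOrderOf_nsmul_eq_zero (1 : A)
          rw [nsmul_eq_mul, mul_one] at h1
          rw [nsmul_eq_mul, h1, zero_mul]) hcop
    have hne : ψ a ≠ 0 := by
      intro h0
      apply hn0
      rw [hn, h0, natDegree_zero]
    exact hne (leadingCoeff_eq_zero.mp hcoeff0)
  -- spanning
  have hspan : ∀ a : A, ∃ (M : ℕ) (k : ℕ → invSubring ψ),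
      a = ∑ j ∈ Finset.range M, ((k j : A)) * t ^ j := by
    suffices H : ∀ (N : ℕ) (a : A), (ψ a).natDegree ≤ N → ∃ (M : ℕ) (k : ℕ → invSubring ψ),
        a = ∑ j ∈ Finset.range M, ((k j : A)) * t ^ j by
      exact fun a => H _ a le_rfl
    intro N
    induction N using Nat.strong_induction_on with
    | _ N IH =>
    intro a hleN
    by_cases h0 : (ψ a).natDegree = 0
    · have hCa : ψ a = C a := by
        have h1 := eq_C_of_natDegree_eq_zero h0
        have h2 := hcounit a
        rw [h1, eval_C] at h2
        rw [h1, h2]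
      refine ⟨1, fun _ => ⟨a, hCa⟩, ?_⟩
      simp
    · have hnpos : 0 < (ψ a).natDegree := Nat.pos_of_ne_zero h0
      obtain ⟨q, hq⟩ := hdvd a
      have hq1 : 1 ≤ q := by
        rcases Nat.eq_zero_or_pos q with h | h
        · rw [h, Nat.mul_zero] at hq; omega
        · exact h
      have htopi := top_inv a
      have hui : ψ ((↑(u ^ q) : A)) = C ((↑(u ^ q) : A)) := by
        rw [Units.val_pow_eq_pow_val, map_pow, hu_inv, ← C_pow]
      have hki : ψ ((↑((u ^ q)⁻¹) : A)) = C ((↑((u ^ q)⁻¹) : A)) := unit_inv_inv ψ (u ^ q) hui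
      set kt : A := (ψ a).coeff (ψ a).natDegree * ((↑((u ^ q)⁻¹) : A)) with hkt
      have hktinv : ψ kt = C kt := by
        rw [hkt, map_mul, htopi, hki, ← C_mul]
      set a' := a - kt * t ^ q with ha'def
      have ha' : ψ a' = ψ a - C kt * (ψ t) ^ q := by
        rw [ha'def, map_sub, map_mul, map_pow, hktinv]
      have hQq : ((ψ t) ^ q).coeff ((ψ a).natDegree) = ((u : A)) ^ q := by
        have hcp := coeff_pow_mul_natDegree (ψ t) q
        have hlc : (ψ t).leadingCoeff = ((u : A)) := by
          rw [← coeff_natDegree, hQd, hQtop]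
        rw [hQd, hlc] at hcp
        rw [show (ψ a).natDegree = q * d from by rw [hq, Nat.mul_comm], hcp]
      have hcoe : (ψ a').coeff ((ψ a).natDegree) = 0 := by
        rw [ha', coeff_sub, coeff_C_mul, hQq, hkt]
        have huu : ((↑((u ^ q)⁻¹) : A)) * ((u : A)) ^ q = 1 := by
          rw [← Units.val_pow_eq_pow_val, ← Units.val_mul]
          simp
        rw [mul_assoc, huu, mul_one, sub_self]
      have hdle : (ψ a').natDegree ≤ (ψ a).natDegree := by
        rw [ha']
        refine (natDegree_sub_le _ _).trans (max_le le_rfl ?_)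
        refine natDegree_mul_le.trans ?_
        rw [natDegree_C, zero_add]
        refine natDegree_pow_le.trans ?_
        rw [hQd, hq, Nat.mul_comm]
      have hdlt : (ψ a').natDegree < (ψ a).natDegree := by
        rcases lt_or_eq_of_le hdle with h | h
        · exact h
        · exfalso
          have hzz : (ψ a').leadingCoeff = 0 := by rw [← coeff_natDegree, h, hcoe]
          have hz0 : ψ a' = 0 := leadingCoeff_eq_zero.mp hzz
          rw [hz0, natDegree_zero] at h
          omega
      obtain ⟨M', k', hk'⟩ := IH (ψ a').natDegree (by omega) a' le_rfl
      refine ⟨max M' (q + 1), fun j =>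
        (if j < M' then k' j else 0) + (if j = q then (⟨kt, hktinv⟩ : invSubring ψ) else 0), ?_⟩
      have hterm : ∀ j : ℕ,
          ((((if j < M' then k' j else 0) + (if j = q then (⟨kt, hktinv⟩ : invSubring ψ) else 0) :
            invSubring ψ)) : A) * t ^ j
          = (if j < M' then ((k' j : A)) else 0) * t ^ j
            + (if j = q then kt else 0) * t ^ j := by
        intro j
        rw [Subring.coe_add, add_mul]
        congr 2
        · split <;> simp
        · split <;> simp
      rw [Finset.sum_congr rfl fun j _ => hterm j, Finset.sum_add_distrib]
      have hpart1 : ∑ j ∈ Finset.range (max M' (q + 1)),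
          (if j < M' then ((k' j : A)) else 0) * t ^ j = a' := by
        rw [pad_sum (fun j => ((k' j : A)) * t ^ j) _ M' _ (le_max_left _ _)
          (fun j hj => by rw [if_pos hj]) (fun j hj => by rw [if_neg (by omega), zero_mul])]
        exact hk'.symm
      have hpart2 : ∑ j ∈ Finset.range (max M' (q + 1)),
          (if j = q then kt else 0) * t ^ j = kt * t ^ q := by
        have hq' : q ∈ Finset.range (max M' (q + 1)) :=
          Finset.mem_range.mpr (lt_of_lt_of_le (Nat.lt_succ_self q) (le_max_right _ _))
        rw [Finset.sum_eq_single_of_mem q hq' (fun i _ hne => by rw [if_neg hne, zero_mul]),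
          if_pos rfl]
      rw [hpart1, hpart2, ha'def]
      ring
    -- tensor representation
  have t_pow : ∀ (kk : invSubring ψ) (j : ℕ) (b : B),
      b ⊗ₜ[invSubring ψ] (((kk : A)) * t ^ j) = (kk • b) ⊗ₜ[invSubring ψ] (t ^ j) := by
    intro kk j b
    have h1 : ((kk : A)) * t ^ j = kk • (t ^ j) := rfl
    rw [h1, ← TensorProduct.smul_tmul]
  have hrep : ∀ y : B ⊗[invSubring ψ] A, ∃ (M : ℕ) (β : ℕ → B),
      y = ∑ j ∈ Finset.range M, β j ⊗ₜ[invSubring ψ] (t ^ j) := by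
    intro y
    induction y using TensorProduct.induction_on with
    | zero => exact ⟨0, fun _ => 0, by simp⟩
    | tmul b a =>
      obtain ⟨M, k, hk⟩ := hspan a
      refine ⟨M, fun j => k j • b, ?_⟩
      rw [hk, tmul_sum]
      exact Finset.sum_congr rfl fun j _ => t_pow (k j) j b
    | add y z hy hz =>
      obtain ⟨M1, β1, h1⟩ := hy
      obtain ⟨M2, β2, h2⟩ := hz
      refine ⟨max M1 M2, fun j => (if j < M1 then β1 j else 0) + (if j < M2 then β2 j else 0), ?_⟩
      have hterm2 : ∀ j : ℕ,
          ((if j < M1 then β1 j else 0) + (if j < M2 then β2 j else 0)) ⊗ₜ[invSubring ψ] (t ^ j)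
          = (if j < M1 then β1 j else 0) ⊗ₜ[invSubring ψ] (t ^ j)
            + (if j < M2 then β2 j else 0) ⊗ₜ[invSubring ψ] (t ^ j) :=
        fun j => add_tmul _ _ _
      rw [Finset.sum_congr rfl fun j _ => hterm2 j, Finset.sum_add_distrib,
        pad_sum (fun j => β1 j ⊗ₜ[invSubring ψ] (t ^ j)) _ M1 _ (le_max_left _ _)
          (fun j hj => by rw [if_pos hj]) (fun j hj => by rw [if_neg (by omega), zero_tmul]),
        pad_sum (fun j => β2 j ⊗ₜ[invSubring ψ] (t ^ j)) _ M2 _ (le_max_right _ _)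
          (fun j hj => by rw [if_pos hj]) (fun j hj => by rw [if_neg (by omega), zero_tmul]),
        h1, h2]
  -- degree of mapped slice polynomial
  have hQmapd : (Polynomial.map ρ (ψ t)).natDegree = d := by
    refine le_antisymm (natDegree_map_le.trans (le_of_eq hQd)) (le_natDegree_of_ne_zero ?_)
    rw [coeff_map, hQtop]
    intro hzero
    have h2 : IsUnit (0 : B ⊗[invSubring ψ] A) := hzero ▸ (u.isUnit.map ρ)
    rw [isUnit_zero_iff] at h2
    exact zero_ne_one h2
  have hQmlc : (Polynomial.map ρ (ψ t)).leadingCoeff = ρ ((u : A)) := by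
    rw [← coeff_natDegree, hQmapd, coeff_map, hQtop]
  -- killing the positive-degree coefficients
  have hkill : ∀ (M : ℕ) (β : ℕ → B) (y : B ⊗[invSubring ψ] A),
      (∑ j ∈ Finset.range (M + 1),
        C (β j ⊗ₜ[invSubring ψ] (1 : A)) * (Polynomial.map ρ (ψ t)) ^ j = C y) →
      ∀ j, 1 ≤ j → j ≤ M → β j ⊗ₜ[invSubring ψ] (1 : A) = 0 := by
    intro M
    induction M with
    | zero => intro β y h j h1 h2; omega
    | succ M IH =>
      intro β y h j h1 h2
      have htop : β (M + 1) ⊗ₜ[invSubring ψ] (1 : A) = 0 := by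
        have hsum : (∑ jj ∈ Finset.range (M + 1 + 1),
            C (β jj ⊗ₜ[invSubring ψ] (1 : A)) * (Polynomial.map ρ (ψ t)) ^ jj).coeff (d * (M + 1))
            = (β (M + 1) ⊗ₜ[invSubring ψ] (1 : A)) * (ρ ((u : A))) ^ (M + 1) := by
          rw [finset_sum_coeff]
          refine (Finset.sum_eq_single_of_mem (M + 1) (Finset.self_mem_range_succ _) ?_).trans ?_
          · intro i hi hne
            apply coeff_eq_zero_of_natDegree_lt
            refine lt_of_le_of_lt natDegree_mul_le ?_
            rw [natDegree_C, zero_add]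
            refine lt_of_le_of_lt natDegree_pow_le ?_
            rw [hQmapd]
            have hi' : i ≤ M + 1 := Nat.lt_succ_iff.mp (Finset.mem_range.mp hi)
            have hiM : i ≤ M := by omega
            calc i * d ≤ M * d := Nat.mul_le_mul_right d hiM
              _ < d * (M + 1) := by rw [Nat.mul_comm d (M + 1), Nat.succ_mul]; omega
          · rw [coeff_C_mul]
            congr 1
            have hcp := coeff_pow_mul_natDegree (Polynomial.map ρ (ψ t)) (M + 1)
            rw [hQmapd, hQmlc] at hcp
            rw [show d * (M + 1) = (M + 1) * d from Nat.mul_comm _ _, hcp]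
        rw [h] at hsum
        rw [coeff_C, if_neg (Nat.mul_ne_zero (by omega) (by omega))] at hsum
        exact ((u.isUnit.map ρ).pow (M + 1)).mul_left_eq_zero.mp hsum.symm
      by_cases hj : j = M + 1
      · rw [hj]; exact htop
      · have hsum' : ∑ jj ∈ Finset.range (M + 1),
            C (β jj ⊗ₜ[invSubring ψ] (1 : A)) * (Polynomial.map ρ (ψ t)) ^ jj = C y := by
          rw [Finset.sum_range_succ, htop, map_zero, zero_mul, add_zero] at h
          exact h
        exact IH β y hsum' j h1 (by omega)
  -- conclusion
  obtain ⟨M, β, hβ⟩ := hrep x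
  set β' : ℕ → B := fun j => if j < M then β j else 0 with hβ'def
  have hβ'x : x = ∑ j ∈ Finset.range (M + 1), β' j ⊗ₜ[invSubring ψ] (t ^ j) := by
    rw [hβ]
    exact (pad_sum (fun j => β j ⊗ₜ[invSubring ψ] (t ^ j))
      (fun j => β' j ⊗ₜ[invSubring ψ] (t ^ j)) M (M + 1) (Nat.le_succ M)
      (fun j hj => by simp only [hβ'def]; rw [if_pos hj])
      (fun j hj => by simp only [hβ'def]; rw [if_neg (by omega), zero_tmul])).symm
  have hφx : ∑ j ∈ Finset.range (M + 1),
      C (β' j ⊗ₜ[invSubring ψ] (1 : A)) * (Polynomial.map ρ (ψ t)) ^ j = C x := by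
    rw [← hx, hβ'x, map_sum]
    refine Finset.sum_congr rfl fun j _ => ?_
    rw [hφ' (β' j) (t ^ j), map_pow, Polynomial.map_pow]
  have hz := hkill M β' x hφx
  refine ⟨β' 0, ?_⟩
  rw [hβ'x, Finset.sum_range_succ']
  have hzero : ∀ i ∈ Finset.range M, β' (i + 1) ⊗ₜ[invSubring ψ] (t ^ (i + 1)) = 0 := by
    intro i hi
    have hi' : i < M := Finset.mem_range.mp hi
    have h1 : β' (i + 1) ⊗ₜ[invSubring ψ] (t ^ (i + 1))
        = (β' (i + 1) ⊗ₜ[invSubring ψ] (1 : A)) * ((1 : B) ⊗ₜ[invSubring ψ] (t ^ (i + 1))) := by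
      rw [Algebra.TensorProduct.tmul_mul_tmul, mul_one, one_mul]
    rw [h1, hz (i + 1) (by omega) (by omega), zero_mul]
  rw [Finset.sum_congr rfl hzero, Finset.sum_const_zero, zero_add, pow_zero]

private lemma eval2_base_change {R A : Type*} [CommRing R] [CommRing A] (f : R →+* A)
    (P : Polynomial R) :
    Polynomial.map (mapRingHom f)
      (P.eval₂ ((Polynomial.C : Polynomial R →+* Polynomial (Polynomial R)).comp Polynomial.C)
        (Polynomial.X + Polynomial.C Polynomial.X))
    = (P.map f).eval₂
        ((Polynomial.C : Polynomial A →+* Polynomial (Polynomial A)).comp Polynomial.C)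
        (Polynomial.X + Polynomial.C Polynomial.X) := by
  have h := Polynomial.hom_eval₂
    (p := P)
    (f := ((Polynomial.C : Polynomial R →+* Polynomial (Polynomial R)).comp Polynomial.C))
    (g := mapRingHom (mapRingHom f))
    (x := ((Polynomial.X + Polynomial.C Polynomial.X : Polynomial (Polynomial R))))
  have h1 : (mapRingHom (mapRingHom f)).comp
      ((Polynomial.C : Polynomial R →+* Polynomial (Polynomial R)).comp Polynomial.C)
      = (((Polynomial.C : Polynomial A →+* Polynomial (Polynomial A)).comp Polynomial.C).comp f) :=
    RingHom.ext fun r => by simp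
  have h2 : mapRingHom (mapRingHom f) (Polynomial.X + Polynomial.C Polynomial.X)
      = Polynomial.X + Polynomial.C Polynomial.X := by simp
  rw [h1, h2] at h
  rw [eval₂_map]
  exact h

/-- local slice theorem, part (d), base change of invariants: for `B` any
commutative ring which is an algebra over the invariant ring `(R_c)^{G_a}` (a subring of
`R_c`), the invariants of the induced coaction `φ' = id_B ⊗ φc` on
`B ⊗_{(R_c)^{G_a}} R_c` are exactly `B ⊗ 1`. -/
theorem stmt8 {K R : Type*} [CommRing K] [CommRing R] [Algebra K R]
    (φ : R →ₐ[K] Polynomial R) (hφ : IsGaCoaction φ.toRingHom)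
    (s : R) (hs : φ s ≠ Polynomial.C s)
    (c : R) (hc : c = (φ s).leadingCoeff)
    (φc : Localization.Away c →+* Polynomial (Localization.Away c))
    (hext : ∀ r : R, φc (algebraMap R (Localization.Away c) r) =
      (φ r).map (algebraMap R (Localization.Away c)))
    (hslice : ∀ a : Localization.Away c,
      (φc a).degree < (φ s).degree → φc a = Polynomial.C a)
    (B : Type*) [CommRing B] [Algebra (invSubring φc) B]
    (φ' : (B ⊗[invSubring φc] Localization.Away c) →+*
      Polynomial (B ⊗[invSubring φc] Localization.Away c))
    (hφ' : ∀ (b : B) (a : Localization.Away c),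
      φ' (b ⊗ₜ a) =
        Polynomial.C ((b ⊗ₜ (1 : Localization.Away c)) :
            B ⊗[invSubring φc] Localization.Away c) *
          Polynomial.map
            ((Algebra.TensorProduct.includeRight :
              Localization.Away c →ₐ[invSubring φc]
                B ⊗[invSubring φc] Localization.Away c) :
              Localization.Away c →+* B ⊗[invSubring φc] Localization.Away c)
            (φc a)) :
    ∀ x : B ⊗[invSubring φc] Localization.Away c,
      φ' x = Polynomial.C x ↔ ∃ b : B, x = b ⊗ₜ (1 : Localization.Away c) := by
  have hφ1 : ∀ r : R, (φ r).eval 0 = r := by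
    intro r; have := hφ.1 r; simpa using this
  have hφ2 : ∀ r : R, (φ r).map φ.toRingHom =
      (φ r).eval₂ ((Polynomial.C : Polynomial R →+* Polynomial (Polynomial R)).comp
        Polynomial.C) (Polynomial.X + Polynomial.C Polynomial.X) := by
    intro r; have := hφ.2 r; simpa using this
  intro x
  constructor
  · intro hx
    -- basic data
    have hd1 : 1 ≤ (φ s).natDegree := by
      by_contra h
      have h0 : (φ s).natDegree = 0 := by omega
      apply hs
      have h1 := eq_C_of_natDegree_eq_zero h0
      have h2 := hφ1 s
      rw [h1, eval_C] at h2
      rw [h1, h2]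
    have hφs0 : φ s ≠ 0 := by
      intro h
      have h2 := hd1
      rw [h, natDegree_zero] at h2
      omega
    have hcu : IsUnit (algebraMap R (Localization.Away c) c) :=
      IsLocalization.Away.algebraMap_isUnit c
    -- counit for φc
    have hcounit : ∀ a : Localization.Away c, (φc a).eval 0 = a := by
      have hhom : ((evalRingHom (0 : Localization.Away c)).comp φc)
          = RingHom.id (Localization.Away c) := by
        refine IsLocalization.ringHom_ext (Submonoid.powers c) (RingHom.ext fun r => ?_)
        simp only [RingHom.comp_apply, RingHom.id_apply, coe_evalRingHom]
        rw [hext r, eval_zero_map, hφ1 r]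
      intro a
      have := RingHom.congr_fun hhom a
      simpa using this
    -- coassociativity for φc
    have hcoassoc : ∀ a : Localization.Away c, (φc a).map φc =
        (φc a).eval₂ ((Polynomial.C : Polynomial (Localization.Away c) →+*
          Polynomial (Polynomial (Localization.Away c))).comp Polynomial.C)
          (Polynomial.X + Polynomial.C Polynomial.X) := by
      have hhom : (mapRingHom φc).comp φc
          = (eval₂RingHom (S := Polynomial (Polynomial (Localization.Away c))) ((Polynomial.C : Polynomial (Localization.Away c) →+*
              Polynomial (Polynomial (Localization.Away c))).comp Polynomial.C)
              (Polynomial.X + Polynomial.C Polynomial.X)).comp φc := by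
        have hagree : ((mapRingHom φc).comp φc).comp (algebraMap R (Localization.Away c))
            = ((eval₂RingHom (S := Polynomial (Polynomial (Localization.Away c))) ((Polynomial.C : Polynomial (Localization.Away c) →+*
                Polynomial (Polynomial (Localization.Away c))).comp Polynomial.C)
                (Polynomial.X + Polynomial.C Polynomial.X)).comp φc).comp
                  (algebraMap R (Localization.Away c)) := by
          refine RingHom.ext fun r => ?_
          simp only [RingHom.comp_apply, coe_mapRingHom, coe_eval₂RingHom]
          rw [hext r, Polynomial.map_map]
          have hcomp : φc.comp (algebraMap R (Localization.Away c))
              = (mapRingHom (algebraMap R (Localization.Away c))).comp φ.toRingHom :=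
            RingHom.ext fun r' => by simpa using hext r'
          rw [hcomp, ← Polynomial.map_map, hφ2 r]
          exact eval2_base_change (algebraMap R (Localization.Away c)) (φ r)
        exact IsLocalization.ringHom_ext (S := Localization.Away c)
          (P := Polynomial (Polynomial (Localization.Away c))) (Submonoid.powers c) hagree
      intro a
      have h3 := RingHom.congr_fun hhom a
      simpa using h3
    -- slice data
    have hQdeg : (φc (algebraMap R (Localization.Away c) s)).natDegree ≤ (φ s).natDegree := by
      rw [hext s]
      exact natDegree_map_le
    have hQtop : (φc (algebraMap R (Localization.Away c) s)).coeff (φ s).natDegree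
        = ↑hcu.unit := by
      rw [hext s, coeff_map, coeff_natDegree, ← hc, hcu.unit_spec]
    have hsl : ∀ a : Localization.Away c,
        (φc a).degree < (((φ s).natDegree : ℕ) : WithBot ℕ) → φc a = Polynomial.C a := by
      intro a ha
      refine hslice a (lt_of_lt_of_le ha ?_)
      rw [degree_eq_natDegree hφs0]
    exact main_invariant φc hcounit hcoassoc (algebraMap R (Localization.Away c) s)
      hcu.unit (φ s).natDegree hd1 hQdeg hQtop hsl B φ' hφ' x hx
  · rintro ⟨b, rfl⟩
    rw [hφ' b 1, map_one, Polynomial.map_one, mul_one]
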